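/- Let (X,φ,D,I) be an impulsive dynamical system with I(D) ∩ D = ∅ and I Lipschitz. On the quotient X/∼ by the relation x ∼ y iff x = y, y = I(x), x = I(y), or I(x) = I(y), define the pseudometric d̃(x̃,ỹ) = inf{ Σᵢ d(pᵢ,qᵢ) } over finite chains with p₁ ∈ x̃, q_n ∈ ỹ, qᵢ ∼ p_{i+1}. Then for any two classes x̃, ỹ of points of D, d̃(x̃,ỹ) = 0 implies x̃ = ỹ. -/
import Mathlib


open Set Filter
open scoped ENNReal NNReal Classical Real

variable {α : Type*}

/-- First impulse time `τ₁(x) = inf { t > 0 : φ_t(x) ∈ D }` (`∞` if the orbit never meets `D`). -/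
noncomputable def tau1 [MetricSpace α] (φ : ℝ → α → α) (D : Set α) (x : α) : ℝ≥0∞ :=
  sInf (ENNReal.ofReal '' {t : ℝ | 0 < t ∧ φ t x ∈ D})

/-- The successive impulse points `x⁰ = x`, `x¹ = φ_{τ₁(x)}(x)`,
`x^{n+1} = φ_{τ₁(I(xⁿ))}(I(xⁿ))`. -/
noncomputable def impSeq [MetricSpace α] (φ : ℝ → α → α) (D : Set α) (I : α → α) (x : α) :
    ℕ → α
  | 0 => x
  | n + 1 =>
      let y := if n = 0 then x else I (impSeq φ D I x n)
      φ (tau1 φ D y).toReal y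

/-- The successive impulse times `τ_0 = 0`, `τ_{n+1}(x) = τ_n(x) + τ₁(I(xⁿ))`
(with `τ_1(x) = τ₁(x)`). -/
noncomputable def impTime [MetricSpace α] (φ : ℝ → α → α) (D : Set α) (I : α → α) (x : α) :
    ℕ → ℝ≥0∞
  | 0 => 0
  | n + 1 => impTime φ D I x n + tau1 φ D (if n = 0 then x else I (impSeq φ D I x n))

/-- `(X,φ,D,I)` is an impulsive dynamical system: `φ` is a continuous semiflow, `D` a proper
closed subset, `I` continuous on `D`, every first impulse time is positive, and the total
impulse time is infinite. -/
def IsIDS [MetricSpace α] (φ : ℝ → α → α) (D : Set α) (I : α → α) : Prop :=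
  ((∀ x, φ 0 x = x) ∧ ∀ s t : ℝ, 0 ≤ s → 0 ≤ t → ∀ x, φ (s + t) x = φ s (φ t x)) ∧
  ContinuousOn (fun p : ℝ × α => φ p.1 p.2) (Set.Ici 0 ×ˢ Set.univ) ∧
  IsClosed D ∧ D ≠ Set.univ ∧ ContinuousOn I D ∧
  (∀ x, 0 < tau1 φ D x) ∧ (∀ x, (⨆ n, impTime φ D I x n) = ⊤)

/-- The tube `D_η = ⋃_{x ∈ D} { φ_t(x) : 0 < t < η }`. -/
def tube (φ : ℝ → α → α) (D : Set α) (η : ℝ) : Set α :=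
  ⋃ x ∈ D, (fun t => φ t x) '' Set.Ioo 0 η

/-- `X_η = X \ (D ∪ D_η)`. -/
def Xtube (φ : ℝ → α → α) (D : Set α) (η : ℝ) : Set α :=
  (D ∪ tube φ D η)ᶜ

/-- `ψ` is the impulsive semiflow associated to `(X,φ,D,I)`: it agrees with the impulsive
drift `γ_x` on each interval between consecutive impulse times. -/
def IsImpulsive [MetricSpace α] (φ : ℝ → α → α) (D : Set α) (I : α → α)
    (ψ : ℝ → α → α) : Prop :=
  ∀ x : α,
    (∀ t : ℝ, 0 ≤ t → ENNReal.ofReal t < impTime φ D I x 1 → ψ t x = φ t x) ∧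
    (∀ n : ℕ, 1 ≤ n → ∀ t : ℝ, impTime φ D I x n ≤ ENNReal.ofReal t →
      ENNReal.ofReal t < impTime φ D I x (n + 1) →
      ψ t x = φ (t - (impTime φ D I x n).toReal) (I (impSeq φ D I x n)))

/-- A regular impulsive dynamical system, with the constants `η, ξ` of the definition. -/
def IsRegularIDS [MetricSpace α] (φ : ℝ → α → α) (D : Set α) (I : α → α) (η ξ : ℝ) : Prop :=
  IsIDS φ D I ∧ (I '' D) ∩ D = ∅ ∧ (∃ K : NNReal, LipschitzOnWith K I D) ∧
  0 < ξ ∧ ξ < η / 4 ∧ IsOpen (tube φ D ξ) ∧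
  ((fun x => φ ξ x) '' tube φ D ξ ⊆ Xtube φ D ξ) ∧
  (∀ x ∈ I '' D, ∀ t : ℝ, 0 < t → t ≤ ξ → φ t x ∉ I '' D)

/-- `τ*`: equal to `τ₁` off `D` and to `0` on `D`. -/
noncomputable def tauStar [MetricSpace α] (φ : ℝ → α → α) (D : Set α) (x : α) : ℝ≥0∞ :=
  if x ∈ D then 0 else tau1 φ D x

/-- The relation identifying `x` with `I x` for `x ∈ D`. -/
def IRel (D : Set α) (I : α → α) (x y : α) : Prop :=
  x = y ∨ (x ∈ D ∧ y = I x) ∨ (y ∈ D ∧ x = I y) ∨ (x ∈ D ∧ y ∈ D ∧ I x = I y)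

/-- The chain pseudometric on the quotient by `IRel`:
`d̃(x̃,ỹ) = inf { Σ d(pᵢ,qᵢ) }` over chains `p₀ ∈ x̃`, `q_n ∈ ỹ`, `qᵢ ∼ p_{i+1}`. -/
noncomputable def chainDist (d : α → α → ℝ) (D : Set α) (I : α → α) (x y : α) : ℝ :=
  sInf {r : ℝ | ∃ (n : ℕ) (p q : ℕ → α), IRel D I x (p 0) ∧ IRel D I (q n) y ∧
    (∀ i < n, IRel D I (q i) (p (i + 1))) ∧
    r = ∑ i ∈ Finset.range (n + 1), d (p i) (q i)}


/-- For an impulsive dynamical system with `I(D) ∩ D = ∅` and `I`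
Lipschitz: if `x, y ∈ D` and the chain pseudometric satisfies `d̃(x̃,ỹ) = 0`, then
`x̃ = ỹ` (the equivalence classes coincide). -/
theorem stmt15 {X : Type*} [MetricSpace X] [CompactSpace X]
    (φ : ℝ → X → X) (D : Set X) (I : X → X) (hIDS : IsIDS φ D I)
    (hID : (I '' D) ∩ D = ∅) (hLip : ∃ K : NNReal, LipschitzOnWith K I D) :
    ∀ x ∈ D, ∀ y ∈ D, chainDist dist D I x y = 0 →
      {z : X | IRel D I x z} = {z : X | IRel D I y z} := by
  intro x hx y hy h0
  obtain ⟨K, hK⟩ := hLip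
  classical
  -- D and I '' D are disjoint nonempty compact sets; get a positive separation constant c
  have hDclosed : IsClosed D := hIDS.2.2.1
  have hIcont : ContinuousOn I D := hIDS.2.2.2.2.1
  have hDc : IsCompact D := hDclosed.isCompact
  have hIDc : IsCompact (I '' D) := hDc.image_of_continuousOn hIcont
  have hnotin : ∀ z : X, z ∈ D → z ∈ I '' D → False := by
    intro z hz hz'
    have : z ∈ (I '' D) ∩ D := ⟨hz', hz⟩
    rw [hID] at this
    exact this
  obtain ⟨c, hc0, hc⟩ : ∃ c > 0, ∀ u ∈ D, ∀ v ∈ D, c ≤ dist u (I v) := by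
    obtain ⟨⟨u0, v0⟩, hmem, hmin⟩ := (hDc.prod hIDc).exists_isMinOn
      ⟨⟨x, I x⟩, hx, ⟨x, hx, rfl⟩⟩
      ((continuous_dist (α := X)).continuousOn : ContinuousOn (fun p : X × X => dist p.1 p.2) _)
    refine ⟨dist u0 v0, ?_, ?_⟩
    · have hne : u0 ≠ v0 := by
        rintro rfl
        exact hnotin u0 hmem.1 hmem.2
      exact dist_pos.2 hne
    · intro u hu v hv
      exact hmin (⟨hu, ⟨v, hv, rfl⟩⟩ : (⟨u, I v⟩ : X × X) ∈ D ×ˢ (I '' D))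
  set K' : ℝ := max (K : ℝ) 1 with hK'def
  have hK1 : (1 : ℝ) ≤ K' := le_max_right _ _
  have hK0 : (0 : ℝ) ≤ K' := by linarith
  have hKK : (K : ℝ) ≤ K' := le_max_left _ _
  have hLipd : ∀ u ∈ D, ∀ v ∈ D, dist (I u) (I v) ≤ K' * dist u v := by
    intro u hu v hv
    have := hK.dist_le_mul u hu v hv
    nlinarith [dist_nonneg (x := u) (y := v)]
  -- the invariant along chains
  set Inv : X → ℝ → Prop := fun z E =>
    (∃ w ∈ D, K' * dist z w + dist (I w) (I x) ≤ E) ∨ dist z (I x) ≤ E with hInvdef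
  have hmono : ∀ z E E', E ≤ E' → Inv z E → Inv z E' := by
    intro z E E' hEE h
    rcases h with ⟨w, hw, hle⟩ | hle
    · exact Or.inl ⟨w, hw, hle.trans hEE⟩
    · exact Or.inr (hle.trans hEE)
  have hmove : ∀ z z' E, Inv z E → Inv z' (E + K' * dist z' z) := by
    intro z z' E h
    rcases h with ⟨w, hw, hle⟩ | hle
    · refine Or.inl ⟨w, hw, ?_⟩
      have ht := dist_triangle z' z w
      nlinarith
    · refine Or.inr ?_
      have ht := dist_triangle z' z (I x)
      have hd : (0 : ℝ) ≤ dist z' z := dist_nonneg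
      nlinarith
  have hjump : ∀ u v E, E < c → IRel D I u v → Inv u E → Inv v E := by
    intro u v E hEc hrel h
    rcases hrel with rfl | ⟨hu, rfl⟩ | ⟨hv, rfl⟩ | ⟨hu, hv, hIuv⟩
    · exact h
    · -- v = I u, u ∈ D
      rcases h with ⟨w, hw, hle⟩ | hle
      · refine Or.inr ?_
        have h1 := hLipd u hu w hw
        have h2 := dist_triangle (I u) (I w) (I x)
        linarith
      · exact absurd (hc u hu x hx) (by linarith)
    · -- u = I v, v ∈ D
      rcases h with ⟨w, hw, hle⟩ | hle
      · have h1 : c ≤ dist w (I v) := hc w hw v hv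
        have h2 : dist (I v) w = dist w (I v) := dist_comm _ _
        have h3 : (0 : ℝ) ≤ dist (I w) (I x) := dist_nonneg
        have h4 : dist (I v) w ≤ K' * dist (I v) w := by
          nlinarith [dist_nonneg (x := I v) (y := w)]
        exact absurd hle (by nlinarith)
      · exact Or.inl ⟨v, hv, by simpa [dist_self] using hle⟩
    · -- u, v ∈ D, I u = I v
      rcases h with ⟨w, hw, hle⟩ | hle
      · refine Or.inl ⟨v, hv, ?_⟩
        have h1 := hLipd u hu w hw
        have h2 := dist_triangle (I u) (I w) (I x)
        simp only [dist_self, mul_zero, zero_add]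
        rw [← hIuv]
        linarith
      · exact absurd (hc u hu x hx) (by linarith)
  -- the key estimate for a single chain
  have key : ∀ (n : ℕ) (p q : ℕ → X), IRel D I x (p 0) → IRel D I (q n) y →
      (∀ i < n, IRel D I (q i) (p (i + 1))) →
      K' * (∑ i ∈ Finset.range (n + 1), dist (p i) (q i)) < c →
      dist (I x) (I y) ≤ K' * (∑ i ∈ Finset.range (n + 1), dist (p i) (q i)) := by
    intro n p q hp0 hqn hlink hTc
    set T := ∑ i ∈ Finset.range (n + 1), dist (p i) (q i) with hTdef
    have hpart : ∀ i, i ≤ n →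
        (∑ j ∈ Finset.range (i + 1), dist (p j) (q j)) ≤ T := by
      intro i hi
      apply Finset.sum_le_sum_of_subset_of_nonneg
      · exact Finset.range_subset_range.2 (by omega)
      · intro j _ _; exact dist_nonneg
    have hbase : Inv (p 0) 0 := by
      rcases hp0 with heq | ⟨hxD, hp⟩ | ⟨hpD, hxp⟩ | ⟨hxD, hpD, hIxp⟩
      · exact Or.inl ⟨x, hx, by simp [← heq, dist_self]⟩
      · exact Or.inr (by simp [hp, dist_self])
      · exact absurd ⟨p 0, hpD, hxp.symm⟩ (fun h => hnotin x hx h)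
      · exact Or.inl ⟨p 0, hpD, by simp [dist_self, ← hIxp]⟩
    have hind : ∀ i, i ≤ n →
        Inv (q i) (K' * ∑ j ∈ Finset.range (i + 1), dist (p j) (q j)) := by
      intro i
      induction i with
      | zero =>
        intro _
        have := hmove (p 0) (q 0) 0 hbase
        refine hmono _ _ _ (le_of_eq ?_) this
        rw [Finset.sum_range_one, dist_comm (q 0) (p 0)]
        ring
      | succ i ih =>
        intro hi
        have hi' : i ≤ n := by omega
        have h1 := ih hi'
        have hE : K' * ∑ j ∈ Finset.range (i + 1), dist (p j) (q j) < c := by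
          have := hpart i hi'
          nlinarith [Finset.sum_nonneg (fun j (_ : j ∈ Finset.range (i + 1)) =>
            dist_nonneg (x := p j) (y := q j))]
        have h2 := hjump (q i) (p (i + 1)) _ hE (hlink i (by omega)) h1
        have h3 := hmove (p (i + 1)) (q (i + 1)) _ h2
        refine hmono _ _ _ (le_of_eq ?_) h3
        conv_rhs => rw [Finset.sum_range_succ]
        rw [dist_comm (q (i + 1)) (p (i + 1))]
        ring
    have hfin : Inv (q n) (K' * T) := hind n le_rfl
    -- conclude from the final relation
    rcases hqn with heq | ⟨hqD, hyq⟩ | ⟨hyD, hqy⟩ | ⟨hqD, hyD, hIqy⟩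
    · rcases hfin with ⟨w, hw, hle⟩ | hle
      · have h1 := hLipd y hy w hw
        have h2 := dist_triangle (I y) (I w) (I x)
        rw [dist_comm (I x) (I y)]
        rw [heq] at hle
        linarith
      · rw [heq] at hle
        exact absurd (hc y hy x hx) (by linarith)
    · exact absurd ⟨q n, hqD, hyq.symm⟩ (fun h => hnotin y hy h)
    · rcases hfin with ⟨w, hw, hle⟩ | hle
      · have h1 : c ≤ dist w (I y) := hc w hw y hyD
        have h2 : dist (q n) w = dist w (I y) := by rw [hqy, dist_comm]
        have h3 : (0 : ℝ) ≤ dist (I w) (I x) := dist_nonneg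
        have h4 : dist (q n) w ≤ K' * dist (q n) w := by
          nlinarith [dist_nonneg (x := q n) (y := w)]
        exact absurd hle (by nlinarith)
      · rw [hqy] at hle
        rw [dist_comm (I x) (I y)]
        exact hle
    · rcases hfin with ⟨w, hw, hle⟩ | hle
      · have h1 := hLipd (q n) hqD w hw
        have h2 := dist_triangle (I (q n)) (I w) (I x)
        rw [dist_comm (I x) (I y), ← hIqy]
        linarith
      · exact absurd (hc (q n) hqD x hx) (by linarith)
  -- from chainDist = 0 deduce I x = I y
  have hIxy : I x = I y := by
    by_contra hne
    have hdpos : 0 < dist (I x) (I y) := dist_pos.2 hne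
    set ε : ℝ := min c (dist (I x) (I y)) / K' with hεdef
    have hεpos : 0 < ε := by
      apply div_pos (lt_min hc0 hdpos) (by linarith)
    have hSne : {r : ℝ | ∃ (n : ℕ) (p q : ℕ → X), IRel D I x (p 0) ∧ IRel D I (q n) y ∧
        (∀ i < n, IRel D I (q i) (p (i + 1))) ∧
        r = ∑ i ∈ Finset.range (n + 1), dist (p i) (q i)}.Nonempty := by
      refine ⟨dist x y, 0, fun _ => x, fun _ => y, Or.inl rfl, Or.inl rfl, ?_, ?_⟩
      · intro i hi; omega
      · simp
    have hlt : sInf {r : ℝ | ∃ (n : ℕ) (p q : ℕ → X), IRel D I x (p 0) ∧ IRel D I (q n) y ∧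
        (∀ i < n, IRel D I (q i) (p (i + 1))) ∧
        r = ∑ i ∈ Finset.range (n + 1), dist (p i) (q i)} < ε := by
      have : chainDist dist D I x y < ε := by rw [h0]; exact hεpos
      simpa [chainDist] using this
    obtain ⟨r, hr, hrε⟩ := exists_lt_of_csInf_lt hSne hlt
    obtain ⟨n, p, q, hp0, hqn, hlink, hreq⟩ := hr
    have hKε : K' * r < min c (dist (I x) (I y)) := by
      have : K' * r < K' * ε := by
        apply mul_lt_mul_of_pos_left hrε (by linarith)
      have hKne : K' ≠ 0 := by linarith
      rw [hεdef, mul_div_cancel₀ _ hKne] at this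
      exact this
    rw [hreq] at hKε
    have hbd := key n p q hp0 hqn hlink (lt_of_lt_of_le hKε (min_le_left _ _))
    have := lt_of_lt_of_le hKε (min_le_right _ _)
    linarith
  -- finally, equal classes
  have helper : ∀ a b : X, a ∈ D → b ∈ D → I a = I b → ∀ z, IRel D I a z → IRel D I b z := by
    intro a b ha hb hab z hrel
    rcases hrel with heq | ⟨_, hz⟩ | ⟨hzD, haz⟩ | ⟨_, hzD, haz⟩
    · exact Or.inr (Or.inr (Or.inr ⟨hb, heq ▸ ha, by rw [← hab, heq]⟩))
    · exact Or.inr (Or.inl ⟨hb, by rw [hz, hab]⟩)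
    · exact absurd ⟨z, hzD, haz.symm⟩ (fun h => hnotin a ha h)
    · exact Or.inr (Or.inr (Or.inr ⟨hb, hzD, by rw [← hab, haz]⟩))
  ext z
  simp only [Set.mem_setOf_eq]
  exact ⟨helper x y hx hy hIxy z, helper y x hy hx hIxy.symm z⟩
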